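/- If X is the counting process associated with a linear death process with individual death rate δ > 0 and initial population d₀ (so λ_X(x) = δ(d₀ − x) for x < d₀), and N is an independent unit-rate Poisson process, then S(t) = X(N(t)) has transition rates q^S_{s,k} = C(d₀−s, k)(1 − e^{−δ})^k (e^{−δ})^{d₀−s−k} for 0 ≤ s ≤ d₀−1 and 1 ≤ k ≤ d₀−s, and rate function λ_S(s) = 1 − e^{−δ(d₀−s)} for s < d₀. -/

import Mathlib

open Filter Topology

/-- Poisson probability mass function with mean `t`. -/
noncomputable def poissonPMF (t : ℝ) (n : ℕ) : ℝ :=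
  Real.exp (-t) * t ^ n / n.factorial

/-- Transition probabilities of the time-changed process `S(t) = X(N(t))`, where `N` is a
unit-rate Poisson process independent of `X`: the Poisson mixture of those of `X`. -/
noncomputable def timeChanged (P : ℝ → ℕ → ℕ → ℝ) (t : ℝ) (x y : ℕ) : ℝ :=
  ∑' n : ℕ, poissonPMF t n * P (n : ℝ) x y

lemma poissonPMF_nonneg {t : ℝ} (ht : 0 ≤ t) (n : ℕ) : 0 ≤ poissonPMF t n := by
  unfold poissonPMF
  positivity

lemma poissonPMF_tsum {t : ℝ} : ∑' n : ℕ, poissonPMF t n = 1 := by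
  unfold poissonPMF
  have h : Real.exp t = ∑' n : ℕ, t ^ n / n.factorial := by
    rw [Real.exp_eq_exp_ℝ, NormedSpace.exp_eq_tsum_div]
  have h2 : ∑' n : ℕ, Real.exp (-t) * t ^ n / n.factorial
      = Real.exp (-t) * ∑' n : ℕ, t ^ n / n.factorial := by
    rw [← tsum_mul_left]
    congr 1 with n
    ring
  rw [h2, ← h, ← Real.exp_add]
  simp

lemma poissonPMF_summable {t : ℝ} : Summable (fun n => poissonPMF t n) := by
  unfold poissonPMF
  have h : (fun n : ℕ => Real.exp (-t) * t ^ n / n.factorial)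
      = (fun n : ℕ => Real.exp (-t) * (t ^ n / n.factorial)) := by
    funext n; ring
  rw [h]
  exact (Real.summable_pow_div_factorial t).mul_left _

lemma binom_term_le_one {p : ℝ} (hp0 : 0 ≤ p) (hp1 : p ≤ 1) {m k : ℕ} (hk : k ≤ m) :
    (m.choose k : ℝ) * p ^ k * (1 - p) ^ (m - k) ≤ 1 := by
  have hq : 0 ≤ 1 - p := by linarith
  have hpow := add_pow p (1 - p) m
  have h1 : (1 : ℝ) = ∑ i ∈ Finset.range (m + 1),
      p ^ i * (1 - p) ^ (m - i) * (m.choose i : ℝ) := by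
    have hpq : p + (1 - p) = 1 := by ring
    rw [hpq] at hpow
    simpa using hpow
  calc (m.choose k : ℝ) * p ^ k * (1 - p) ^ (m - k)
      = p ^ k * (1 - p) ^ (m - k) * (m.choose k : ℝ) := by ring
    _ ≤ ∑ i ∈ Finset.range (m + 1), p ^ i * (1 - p) ^ (m - i) * (m.choose i : ℝ) := by
        apply Finset.single_le_sum (f := fun i => p ^ i * (1 - p) ^ (m - i) * (m.choose i : ℝ))
        · intro i _
          positivity
        · simpa using Nat.lt_succ_of_le hk
    _ = 1 := h1.symm

/-- Key analytic lemma: first-order behaviour of a Poisson mixture at time `0⁺`. -/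
lemma poisson_mixture_deriv (a : ℕ → ℝ) (ha : ∀ n, |a n| ≤ 1) :
    Tendsto (fun h : ℝ => ((∑' n : ℕ, poissonPMF h n * a n) - a 0) / h) (𝓝[>] 0)
      (𝓝 (a 1 - a 0)) := by
  -- remainder bound
  have hR : ∀ h : ℝ, 0 ≤ h →
      |(∑' n : ℕ, poissonPMF h n * a n) - Real.exp (-h) * a 0
        - Real.exp (-h) * h * a 1| ≤ h ^ 2 := by
    intro h hh
    have hsum : Summable (fun n : ℕ => poissonPMF h n * a n) := by
      apply Summable.of_norm_bounded poissonPMF_summable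
      intro n
      have hpn := poissonPMF_nonneg hh n
      calc ‖poissonPMF h n * a n‖ = poissonPMF h n * |a n| := by
            rw [norm_mul, Real.norm_eq_abs, Real.norm_eq_abs, abs_of_nonneg hpn]
        _ ≤ poissonPMF h n * 1 := mul_le_mul_of_nonneg_left (ha n) hpn
        _ = poissonPMF h n := by ring
    have hsum1 : Summable (fun n : ℕ => poissonPMF h (n + 1) * a (n + 1)) :=
      (summable_nat_add_iff 1).2 hsum
    have hsum2 : Summable (fun n : ℕ => poissonPMF h (n + 2) * a (n + 2)) :=
      (summable_nat_add_iff 2).2 hsum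
    have hsplit : (∑' n : ℕ, poissonPMF h n * a n)
        = poissonPMF h 0 * a 0 + poissonPMF h 1 * a 1
          + ∑' n : ℕ, poissonPMF h (n + 2) * a (n + 2) := by
      rw [Summable.tsum_eq_zero_add hsum, Summable.tsum_eq_zero_add hsum1]
      have hre : (fun n : ℕ => poissonPMF h (n + 1 + 1) * a (n + 1 + 1))
          = (fun n : ℕ => poissonPMF h (n + 2) * a (n + 2)) := rfl
      rw [hre]
      norm_num
      ring
    have h0 : poissonPMF h 0 = Real.exp (-h) := by
      unfold poissonPMF; simp
    have h1 : poissonPMF h 1 = Real.exp (-h) * h := by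
      unfold poissonPMF; simp
    rw [hsplit, h0, h1]
    have hbound : ∀ n : ℕ, |poissonPMF h (n + 2) * a (n + 2)| ≤ h ^ 2 * poissonPMF h n := by
      intro n
      have hpn := poissonPMF_nonneg hh (n + 2)
      have step1 : |poissonPMF h (n + 2) * a (n + 2)| ≤ poissonPMF h (n + 2) := by
        rw [abs_mul, abs_of_nonneg hpn]
        calc poissonPMF h (n + 2) * |a (n + 2)| ≤ poissonPMF h (n + 2) * 1 :=
              mul_le_mul_of_nonneg_left (ha _) hpn
          _ = poissonPMF h (n + 2) := by ring
      refine step1.trans ?_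
      unfold poissonPMF
      have hf : (0:ℝ) < (n.factorial : ℝ) := by exact_mod_cast n.factorial_pos
      calc Real.exp (-h) * h ^ (n + 2) / ((n + 2).factorial : ℝ)
          ≤ Real.exp (-h) * h ^ (n + 2) / (n.factorial : ℝ) :=
            div_le_div_of_nonneg_left (by positivity) hf
              (by exact_mod_cast Nat.factorial_le (by omega : n ≤ n + 2))
        _ = h ^ 2 * (Real.exp (-h) * h ^ n / (n.factorial : ℝ)) := by
            field_simp
            ring
    have habs : |∑' n : ℕ, poissonPMF h (n + 2) * a (n + 2)| ≤ h ^ 2 := by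
      have hsum3 : Summable (fun n : ℕ => h ^ 2 * poissonPMF h n) :=
        poissonPMF_summable.mul_left _
      have hb := tsum_of_norm_bounded (f := fun n : ℕ => poissonPMF h (n + 2) * a (n + 2))
        hsum3.hasSum (fun n => by rw [Real.norm_eq_abs]; exact hbound n)
      rw [Real.norm_eq_abs] at hb
      calc |∑' n : ℕ, poissonPMF h (n + 2) * a (n + 2)|
          ≤ ∑' n : ℕ, h ^ 2 * poissonPMF h n := hb
        _ = h ^ 2 * ∑' n : ℕ, poissonPMF h n := tsum_mul_left
        _ = h ^ 2 := by rw [poissonPMF_tsum]; ring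
    calc |Real.exp (-h) * a 0 + Real.exp (-h) * h * a 1
          + (∑' n : ℕ, poissonPMF h (n + 2) * a (n + 2))
          - Real.exp (-h) * a 0 - Real.exp (-h) * h * a 1|
        = |∑' n : ℕ, poissonPMF h (n + 2) * a (n + 2)| := by congr 1; ring
      _ ≤ h ^ 2 := habs
  -- decomposition of the quotient
  have heq : ∀ h : ℝ, h ≠ 0 →
      ((∑' n : ℕ, poissonPMF h n * a n) - a 0) / h
        = ((Real.exp (-h) - 1) / h) * a 0 + Real.exp (-h) * a 1
          + ((∑' n : ℕ, poissonPMF h n * a n) - Real.exp (-h) * a 0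
            - Real.exp (-h) * h * a 1) / h := by
    intro h hh
    field_simp
    ring
  -- limits of each piece
  have lim1 : Tendsto (fun h : ℝ => (Real.exp (-h) - 1) / h) (𝓝[>] 0) (𝓝 (-1)) := by
    have hd : HasDerivAt (fun h : ℝ => Real.exp (-h)) (-1) 0 := by
      have := (Real.hasDerivAt_exp (-0)).comp 0 (hasDerivAt_neg 0)
      simpa [Function.comp_def] using this
    have hslope := hasDerivAt_iff_tendsto_slope.1 hd
    have hmono : 𝓝[>] (0:ℝ) ≤ 𝓝[≠] (0:ℝ) :=
      nhdsWithin_mono _ (fun x hx => ne_of_gt hx)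
    refine (hslope.mono_left hmono).congr (fun h => ?_)
    rw [slope_def_field]
    simp only [neg_zero, Real.exp_zero, sub_zero]
  have lim2 : Tendsto (fun h : ℝ => Real.exp (-h) * a 1) (𝓝[>] 0) (𝓝 (a 1)) := by
    have hc : ContinuousAt (fun h : ℝ => Real.exp (-h) * a 1) 0 := by fun_prop
    have := hc.continuousWithinAt (s := Set.Ioi 0)
    simpa using this.tendsto
  have lim3 : Tendsto (fun h : ℝ =>
      ((∑' n : ℕ, poissonPMF h n * a n) - Real.exp (-h) * a 0
        - Real.exp (-h) * h * a 1) / h) (𝓝[>] 0) (𝓝 0) := by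
    apply squeeze_zero_norm' (a := fun h : ℝ => h)
    · filter_upwards [self_mem_nhdsWithin] with h (hh : 0 < h)
      rw [Real.norm_eq_abs, abs_div, abs_of_pos hh, div_le_iff₀ hh]
      calc |(∑' n : ℕ, poissonPMF h n * a n) - Real.exp (-h) * a 0
            - Real.exp (-h) * h * a 1| ≤ h ^ 2 := hR h hh.le
        _ = h * h := sq h
    · exact tendsto_id.mono_left nhdsWithin_le_nhds
  have lima : Tendsto (fun h : ℝ => ((Real.exp (-h) - 1) / h) * a 0
      + Real.exp (-h) * a 1
      + ((∑' n : ℕ, poissonPMF h n * a n) - Real.exp (-h) * a 0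
        - Real.exp (-h) * h * a 1) / h) (𝓝[>] 0) (𝓝 ((-1) * a 0 + a 1 + 0)) :=
    ((lim1.mul_const (a 0)).add lim2).add lim3
  have hval : (-1 : ℝ) * a 0 + a 1 + 0 = a 1 - a 0 := by ring
  rw [hval] at lima
  refine lima.congr' ?_
  filter_upwards [self_mem_nhdsWithin] with h (hh : 0 < h)
  exact (heq h hh.ne').symm

/-- **Binomial Poisson process.** If `X` counts the deaths of a linear death
process with individual death rate `δ > 0` and initial population `d₀` (so, given
`X(0) = s ≤ d₀`, the number of new deaths `X(t) - s` is binomial with `d₀ - s` trials and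
success probability `1 - exp (-δt)`) and `N` is an independent unit-rate Poisson process,
then `S(t) = X(N(t))` has transition rates
`q^S_{s,k} = C(d₀-s, k) (1 - exp (-δ))^k (exp (-δ))^(d₀-s-k)` for `0 ≤ s ≤ d₀ - 1` and
`1 ≤ k ≤ d₀ - s`, and rate function `λ_S(s) = 1 - exp (-δ(d₀-s))` for `s < d₀`. -/
theorem stmt6 (δ : ℝ) (hδ : 0 < δ) (d₀ : ℕ) (P : ℝ → ℕ → ℕ → ℝ)
    (hPdef : ∀ t : ℝ, 0 ≤ t → ∀ s k : ℕ, s + k ≤ d₀ →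
      P t s (s + k) = (d₀ - s).choose k *
        (1 - Real.exp (-(δ * t))) ^ k * Real.exp (-(δ * t)) ^ (d₀ - s - k))
    (hPzero : ∀ t : ℝ, 0 ≤ t → ∀ s y : ℕ, y < s ∨ d₀ < y → P t s y = 0) :
    (∀ s k : ℕ, s < d₀ → 1 ≤ k → k ≤ d₀ - s →
      Tendsto (fun h : ℝ => timeChanged P h s (s + k) / h) (𝓝[>] 0)
        (𝓝 ((d₀ - s).choose k * (1 - Real.exp (-δ)) ^ k *
          Real.exp (-δ) ^ (d₀ - s - k)))) ∧
    (∀ s : ℕ, s < d₀ →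
      Tendsto (fun h : ℝ => (1 - timeChanged P h s s) / h) (𝓝[>] 0)
        (𝓝 (1 - Real.exp (-(δ * (d₀ - s : ℕ)))))) := by
  -- bound on P values
  have hPle : ∀ (n : ℕ) (s k : ℕ), s + k ≤ d₀ → |P (n : ℝ) s (s + k)| ≤ 1 := by
    intro n s k hsk
    have hn : (0:ℝ) ≤ (n : ℝ) := Nat.cast_nonneg n
    rw [hPdef (n : ℝ) hn s k hsk]
    set p : ℝ := 1 - Real.exp (-(δ * n)) with hp
    have hexp : Real.exp (-(δ * n)) ≤ 1 :=
      Real.exp_le_one_iff.2 (neg_nonpos.2 (by positivity))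
    have hexp0 : 0 < Real.exp (-(δ * n)) := Real.exp_pos _
    have hp0 : 0 ≤ p := by rw [hp]; linarith
    have hp1 : p ≤ 1 := by rw [hp]; linarith
    have hq : Real.exp (-(δ * n)) = 1 - p := by rw [hp]; ring
    rw [hq]
    have hkle : k ≤ d₀ - s := by omega
    have hle := binom_term_le_one hp0 hp1 hkle
    have hnn : 0 ≤ ((d₀ - s).choose k : ℝ) * p ^ k * (1 - p) ^ (d₀ - s - k) := by
      have h1p : (0:ℝ) ≤ 1 - p := by linarith
      positivity
    rw [abs_of_nonneg hnn]
    exact hle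
  constructor
  · intro s k hs hk hkd
    have hsk : s + k ≤ d₀ := by omega
    set a : ℕ → ℝ := fun n => P (n : ℝ) s (s + k) with ha
    have ha1 : ∀ n, |a n| ≤ 1 := fun n => hPle n s k hsk
    have key := poisson_mixture_deriv a ha1
    have ha0 : a 0 = 0 := by
      rw [ha]
      simp only [Nat.cast_zero]
      rw [hPdef 0 le_rfl s k hsk]
      simp [zero_pow (by omega : k ≠ 0)]
    have haone : a 1 = (d₀ - s).choose k * (1 - Real.exp (-δ)) ^ k *
        Real.exp (-δ) ^ (d₀ - s - k) := by
      rw [ha]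
      simp only [Nat.cast_one]
      rw [hPdef 1 zero_le_one s k hsk]
      norm_num
    rw [ha0, haone] at key
    simp only [sub_zero] at key
    exact key.congr (fun h => rfl)
  · intro s hs
    set a : ℕ → ℝ := fun n => P (n : ℝ) s s with ha
    have hsk : s + 0 ≤ d₀ := by omega
    have ha1 : ∀ n, |a n| ≤ 1 := by
      intro n
      have := hPle n s 0 hsk
      simpa using this
    have key := (poisson_mixture_deriv a ha1).neg
    have hd0 := hPdef 0 le_rfl s 0 hsk
    have hd1 := hPdef 1 zero_le_one s 0 hsk
    simp only [Nat.add_zero] at hd0 hd1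
    have ha0 : a 0 = 1 := by
      rw [ha]
      simp only [Nat.cast_zero]
      rw [hd0]
      simp
    have haone : a 1 = Real.exp (-(δ * (d₀ - s : ℕ))) := by
      rw [ha]
      simp only [Nat.cast_one]
      rw [hd1]
      rw [← Real.exp_nat_mul]
      norm_num
      ring_nf
    rw [ha0, haone] at key
    have heq : -(Real.exp (-(δ * ((d₀ - s : ℕ) : ℝ))) - 1)
        = 1 - Real.exp (-(δ * ((d₀ - s : ℕ) : ℝ))) := by ring
    rw [heq] at key
    refine key.congr (fun h => ?_)
    have hT : (∑' n : ℕ, poissonPMF h n * a n) = timeChanged P h s s := rfl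
    rw [hT]
    ring
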